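/- arXiv:2305.19882 — 2 statements merged into one kernel-verified Lean document; each statement's English description precedes it below -/
import Mathlib

section
/- No set of more than 32 squares on the 8×8 chessboard is knight-independent: any set of squares, no two of which are a knight's move apart, has at most 32 elements. -/
/-- Two squares are a knight's move apart. -/
def KnightMove (p q : Fin 8 × Fin 8) : Prop :=
  (((p.1 : ℤ) - (q.1 : ℤ)).natAbs = 1 ∧ ((p.2 : ℤ) - (q.2 : ℤ)).natAbs = 2) ∨
  (((p.1 : ℤ) - (q.1 : ℤ)).natAbs = 2 ∧ ((p.2 : ℤ) - (q.2 : ℤ)).natAbs = 1)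

/-- Pair each square with its knight-move partner inside its 2×4 block. -/
def knightPair (p : Fin 8 × Fin 8) : Fin 8 × Fin 8 :=
  (![1,0,3,2,5,4,7,6] p.1, ![2,3,0,1,6,7,4,5] p.2)

def sqIdx (p : Fin 8 × Fin 8) : ℕ := (p.1 : ℕ) * 8 + (p.2 : ℕ)

instance (p q : Fin 8 × Fin 8) : Decidable (KnightMove p q) := by
  unfold KnightMove; infer_instance

set_option maxRecDepth 4000

lemma knightPair_invol : ∀ p, knightPair (knightPair p) = p := by decide

lemma knightPair_move : ∀ p, KnightMove p (knightPair p) := by decide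

lemma knightPair_ne : ∀ p, knightPair p ≠ p := by decide

lemma sqIdx_inj : ∀ p q : Fin 8 × Fin 8, sqIdx p = sqIdx q → p = q := by decide

lemma image_card_le :
    (Finset.univ.image (fun p : Fin 8 × Fin 8 => min (sqIdx p) (sqIdx (knightPair p)))).card ≤ 32 := by
  decide

theorem knight_independent_le_32 (S : Finset (Fin 8 × Fin 8))
    (h : ∀ p ∈ S, ∀ q ∈ S, p ≠ q → ¬ KnightMove p q) :
    S.card ≤ 32 := by
  set g := fun p : Fin 8 × Fin 8 => min (sqIdx p) (sqIdx (knightPair p)) with hg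
  have hinj : Set.InjOn g S := by
    intro p hp q hq hpq
    by_contra hne
    have hmm : min (sqIdx p) (sqIdx (knightPair p)) = min (sqIdx q) (sqIdx (knightPair q)) := hpq
    have key : p = q ∨ p = knightPair q ∨ knightPair p = q ∨ knightPair p = knightPair q := by
      rcases min_cases (sqIdx p) (sqIdx (knightPair p)) with ⟨h1, _⟩ | ⟨h1, _⟩ <;>
      rcases min_cases (sqIdx q) (sqIdx (knightPair q)) with ⟨h2, _⟩ | ⟨h2, _⟩ <;>
        rw [h1, h2] at hmm
      · exact Or.inl (sqIdx_inj _ _ hmm)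
      · exact Or.inr (Or.inl (sqIdx_inj _ _ hmm))
      · exact Or.inr (Or.inr (Or.inl (sqIdx_inj _ _ hmm)))
      · exact Or.inr (Or.inr (Or.inr (sqIdx_inj _ _ hmm)))
    rcases key with rfl | h1 | h1 | h1
    · exact hne rfl
    · exact h q hq p hp (fun e => hne e.symm) (h1 ▸ knightPair_move q)
    · exact h p hp q hq hne (h1 ▸ knightPair_move p)
    · exact hne (by have := congrArg knightPair h1; rwa [knightPair_invol, knightPair_invol] at this)
  calc S.card = (S.image g).card := (Finset.card_image_of_injOn hinj).symm
    _ ≤ (Finset.univ.image g).card :=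
        Finset.card_le_card (Finset.image_subset_image (Finset.subset_univ S))
    _ ≤ 32 := image_card_le
end

section
/- The maximum number of pairwise non-attacking knights on an 8×8 chessboard is exactly 32. -/
set_option maxRecDepth 10000


/-- Pairing function: each of the 32 values is taken by exactly two squares
that are a knight's move apart. -/
instance : ∀ p q : Fin 8 × Fin 8, Decidable (KnightMove p q) := fun p q => by
  unfold KnightMove; infer_instance

def pairIdx (p : Fin 8 × Fin 8) : Fin 32 :=
  ⟨((p.1 : ℕ) / 2) * 8 + ((p.2 : ℕ) / 4) * 4 +
      (if (p.1 : ℕ) % 2 = 0 then (p.2 : ℕ) % 4 else ((p.2 : ℕ) + 2) % 4), by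
    have h1 := p.1.isLt
    have h2 := p.2.isLt
    split <;> omega⟩

lemma pairIdx_key : ∀ p q : Fin 8 × Fin 8, pairIdx p = pairIdx q → p = q ∨ KnightMove p q := by
  decide

def White : Finset (Fin 8 × Fin 8) :=
  Finset.univ.filter (fun p => ((p.1 : ℕ) + (p.2 : ℕ)) % 2 = 0)

lemma white_card : White.card = 32 := by decide

lemma white_nonattack : ∀ p ∈ White, ∀ q ∈ White, ¬ KnightMove p q := by decide

theorem max_nonattacking_knights :
    (∃ S : Finset (Fin 8 × Fin 8), S.card = 32 ∧
        ∀ p ∈ S, ∀ q ∈ S, ¬ KnightMove p q) ∧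
    (∀ S : Finset (Fin 8 × Fin 8),
        (∀ p ∈ S, ∀ q ∈ S, ¬ KnightMove p q) → S.card ≤ 32) := by
  constructor
  · exact ⟨White, white_card, white_nonattack⟩
  · intro S hS
    have : S.card ≤ (Finset.univ : Finset (Fin 32)).card := by
      apply Finset.card_le_card_of_injOn pairIdx (fun _ _ => Finset.mem_univ _)
      intro p hp q hq hfq
      rcases pairIdx_key p q hfq with h | h
      · exact h
      · exact absurd h (hS p hp q hq)
    simpa using this
end
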